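/- Let R be a (q,s) chain ring and let A be an n×m matrix over R. Then the shape of A equals the shape of its transpose Aᵀ. -/

import Mathlib

open scoped BigOperators

section ChainRingDefs

variable {R : Type*} [CommRing R]

/-- For a shape `μ = (μ₁,…,μ_s)` (0-indexed as `μ : Fin s → ℕ`), the exponent of `π`
governing the `j`-th coordinate (0-indexed) of the module `R^μ`: the number of
components of `μ` that are `≤ j`. -/
def shapeExp {s : ℕ} (μ : Fin s → ℕ) (j : ℕ) : ℕ :=
  (Finset.univ.filter fun i : Fin s => μ i ≤ j).card

/-- The last (largest) component `μ_s` of a shape (for monotone `μ`). -/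
def shapeLast {s : ℕ} (μ : Fin s → ℕ) : ℕ := Finset.univ.sup μ

/-- The module `R^μ = ⟨1⟩^{μ₁} × ⟨π⟩^{μ₂−μ₁} × ⋯ × ⟨π^{s−1}⟩^{μ_s−μ_{s−1}}`,
realized as a submodule of `R^{μ_s}`. -/
def shapeModule (R : Type*) [CommRing R] (π : R) {s : ℕ} (μ : Fin s → ℕ) :
    Submodule R (Fin (shapeLast μ) → R) :=
  Submodule.pi Set.univ fun j => Ideal.span {π ^ shapeExp μ (j : ℕ)}

/-- The module `M` has shape `μ`, i.e. `M ≅ R^μ`. -/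
def HasShape (R : Type*) [CommRing R] (π : R) {s : ℕ} (μ : Fin s → ℕ)
    (M : Type*) [AddCommGroup M] [Module R M] : Prop :=
  Nonempty (M ≃ₗ[R] shapeModule R π μ)

/-- The row span of a matrix: the submodule of `R^m` generated by its rows. -/
def rowSpan (R : Type*) [CommRing R] {n m : ℕ} (A : Matrix (Fin n) (Fin m) R) :
    Submodule R (Fin m → R) :=
  Submodule.span R (Set.range fun i => A i)

-- The degree of `a ∈ R`: the unique `l` with `a ∈ ⟨π^l⟩ \ ⟨π^{l+1}⟩` for `a ≠ 0`,
-- and `s` for `a = 0`.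
open Classical in
noncomputable def degR (π : R) (s : ℕ) (a : R) : ℕ :=
  if a = 0 then s else sSup {l : ℕ | a ∈ Ideal.span {π ^ l}}

/-- `j` is the pivot position of the row `r`: the earliest entry among the entries of
least degree in that row. -/
def IsPivotIdx (π : R) (s : ℕ) {m : ℕ} (r : Fin m → R) (j : Fin m) : Prop :=
  (∀ k, degR π s (r j) ≤ degR π s (r k)) ∧ ∀ k, k < j → degR π s (r j) < degR π s (r k)

/-- `V` is a complete set of residues modulo `π` containing `0`. -/
def IsCompleteResidues (π : R) (V : Set R) : Prop :=
  0 ∈ V ∧ ∀ a : R, ∃! v, v ∈ V ∧ a - v ∈ Ideal.span {π}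

/-- The set `R(R,π^l) = {Σ_{i<l} a_i π^i : a_i ∈ V}` of residues modulo `π^l`. -/
def residueSet (π : R) (V : Set R) (l : ℕ) : Set R :=
  {x | ∃ a : Fin l → R, (∀ i, a i ∈ V) ∧ x = ∑ i, a i * π ^ (i : ℕ)}

/-- The matrix `A` is in row canonical form (with respect to the residue set `V`). -/
def IsRCF (π : R) (s : ℕ) (V : Set R) {n m : ℕ} (A : Matrix (Fin n) (Fin m) R) : Prop :=
  -- (1) nonzero rows lie above zero rows
  (∀ i i' : Fin n, i < i' → A i' ≠ 0 → A i ≠ 0) ∧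
  -- (2) pivots of smaller degree lie above pivots of larger degree; among pivots of
  -- equal degree, earlier pivots lie above later ones
  (∀ i i' : Fin n, ∀ j j' : Fin m, i < i' → A i ≠ 0 → A i' ≠ 0 →
      IsPivotIdx π s (A i) j → IsPivotIdx π s (A i') j' →
      degR π s (A i j) ≤ degR π s (A i' j') ∧
        (degR π s (A i j) = degR π s (A i' j') → j ≤ j')) ∧
  -- (3) every pivot equals `π^l` for some `0 ≤ l ≤ s-1`
  (∀ i : Fin n, ∀ j : Fin m, A i ≠ 0 → IsPivotIdx π s (A i) j →
      degR π s (A i j) < s ∧ A i j = π ^ degR π s (A i j)) ∧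
  -- (4) entries below a pivot in its column are zero; entries above lie in `R(R,π^l)`
  (∀ i : Fin n, ∀ j : Fin m, A i ≠ 0 → IsPivotIdx π s (A i) j →
      (∀ i' : Fin n, i < i' → A i' j = 0) ∧
      (∀ i' : Fin n, i' < i → A i' j ∈ residueSet π V (degR π s (A i j))))

/-- For a shape `κ` (0-indexed) and `i : Fin s`, the previous component `κ_{i-1}`
(`0` when `i = 0`); with the paper's 1-indexed convention this is `κ_i` for the
0-indexed position `i` (whose 1-indexed position is `i+1`). -/
def prevVal {s : ℕ} (κ : Fin s → ℕ) (i : Fin s) : ℕ :=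
  if (i : ℕ) = 0 then 0
  else κ ⟨(i : ℕ) - 1, lt_of_le_of_lt (Nat.sub_le _ _) i.isLt⟩

end ChainRingDefs

section AuxShapeTranspose

open Matrix

variable {R : Type*} [CommRing R]

/-- In a local ring with nilpotent principal maximal ideal, every element is a unit
times a power of the generator. -/
lemma aux_exists_unit_pow [IsLocalRing R] {π : R} {s : ℕ}
    (hmax : IsLocalRing.maximalIdeal R = Ideal.span {π}) (hnil : π ^ s = 0) (a : R) :
    ∃ u : Rˣ, ∃ d : ℕ, a = ↑u * π ^ d := by
  have key : ∀ t : ℕ, ∀ a : R, (∃ u : Rˣ, ∃ d : ℕ, a = ↑u * π ^ d) ∨ a ∈ Ideal.span {π ^ t} := by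
    intro t
    induction t with
    | zero =>
      intro a
      right
      simpa using Ideal.mem_top (a := a)
    | succ t ih =>
      intro a
      rcases ih a with h | h
      · exact Or.inl h
      · obtain ⟨c, hc⟩ := (Ideal.mem_span_singleton.mp h)
        by_cases hu : IsUnit c
        · obtain ⟨u, rfl⟩ := hu
          exact Or.inl ⟨u, t, by rw [hc, mul_comm]⟩
        · have hmem : c ∈ IsLocalRing.maximalIdeal R := hu
          rw [hmax, Ideal.mem_span_singleton] at hmem
          obtain ⟨c', rfl⟩ := hmem
          right
          rw [Ideal.mem_span_singleton]
          exact ⟨c', by rw [hc]; ring⟩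
  rcases key s a with h | h
  · exact h
  · rw [hnil, Ideal.span_singleton_eq_bot.mpr rfl, Submodule.mem_bot] at h
    exact ⟨1, s, by simp [h, hnil]⟩

/-- Divisibility is total in a finite chain ring. -/
lemma aux_dvd_total [IsLocalRing R] {π : R} {s : ℕ}
    (hmax : IsLocalRing.maximalIdeal R = Ideal.span {π}) (hnil : π ^ s = 0) (a b : R) :
    a ∣ b ∨ b ∣ a := by
  obtain ⟨u, d, rfl⟩ := aux_exists_unit_pow hmax hnil a
  obtain ⟨v, e, rfl⟩ := aux_exists_unit_pow hmax hnil b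
  rcases le_total d e with h | h
  · left
    rw [Units.mul_left_dvd, Units.dvd_mul_left]
    exact pow_dvd_pow _ h
  · right
    rw [Units.mul_left_dvd, Units.dvd_mul_left]
    exact pow_dvd_pow _ h

/-- A finite nonempty family in a ring with total divisibility has a member dividing all. -/
lemma aux_exists_dvd_all {ι : Type*} [Fintype ι] [Nonempty ι]
    (htot : ∀ a b : R, a ∣ b ∨ b ∣ a) (f : ι → R) :
    ∃ i, ∀ j, f i ∣ f j := by
  classical
  have key : ∀ t : Finset ι, t.Nonempty → ∃ i ∈ t, ∀ j ∈ t, f i ∣ f j := by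
    intro t
    induction t using Finset.induction with
    | empty => intro h; simp at h
    | @insert a t ha ih =>
      intro _
      rcases t.eq_empty_or_nonempty with rfl | ht
      · exact ⟨a, by simp⟩
      · obtain ⟨i, hi, hdvd⟩ := ih ht
        rcases htot (f a) (f i) with h | h
        · refine ⟨a, Finset.mem_insert_self _ _, ?_⟩
          intro j hj
          rcases Finset.mem_insert.mp hj with rfl | hj
          · exact dvd_rfl
          · exact h.trans (hdvd j hj)
        · refine ⟨i, Finset.mem_insert_of_mem hi, ?_⟩
          intro j hj
          rcases Finset.mem_insert.mp hj with rfl | hj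
          · exact h
          · exact hdvd j hj
  obtain ⟨i, _, h⟩ := key Finset.univ Finset.univ_nonempty
  exact ⟨i, fun j => h j (Finset.mem_univ j)⟩

/-- The linear equivalence `R × (Fin m → R) ≃ (Fin (m+1) → R)` given by `Fin.cons`. -/
def auxConsLE (R : Type*) [CommRing R] (m : ℕ) : (R × (Fin m → R)) ≃ₗ[R] (Fin (m + 1) → R) where
  toFun x := Fin.cons x.1 x.2
  invFun x := (x 0, Fin.tail x)
  map_add' x y := by
    funext j
    refine Fin.cases ?_ ?_ j <;> simp
  map_smul' t x := by
    funext j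
    refine Fin.cases ?_ ?_ j <;> simp
  left_inv x := by simp
  right_inv x := by simp

/-- The shear map on `Fin (m+1) → R` subtracting `r j • x 0` from coordinate `j+1`. -/
def auxShearF {m : ℕ} (r : Fin m → R) (x : Fin (m + 1) → R) : Fin (m + 1) → R :=
  Fin.cons (x 0) fun j => x j.succ - r j * x 0

lemma auxShearF_zero {m : ℕ} (r : Fin m → R) (x : Fin (m + 1) → R) :
    auxShearF r x 0 = x 0 := rfl

lemma auxShearF_succ {m : ℕ} (r : Fin m → R) (x : Fin (m + 1) → R) (j : Fin m) :
    auxShearF r x j.succ = x j.succ - r j * x 0 := by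
  simp [auxShearF]

/-- The shear map as a linear map. -/
def auxShearL {m : ℕ} (r : Fin m → R) : (Fin (m + 1) → R) →ₗ[R] (Fin (m + 1) → R) where
  toFun := auxShearF r
  map_add' x y := by
    funext j
    refine Fin.cases ?_ ?_ j
    · simp [auxShearF_zero]
    · intro j
      simp only [auxShearF_succ, Pi.add_apply]
      ring
  map_smul' t x := by
    funext j
    refine Fin.cases ?_ ?_ j
    · simp [auxShearF_zero]
    · intro j
      simp only [auxShearF_succ, Pi.smul_apply, smul_eq_mul, RingHom.id_apply]
      ring

/-- The shear map as a linear equivalence. -/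
def auxShearE {m : ℕ} (r : Fin m → R) : (Fin (m + 1) → R) ≃ₗ[R] (Fin (m + 1) → R) :=
  LinearEquiv.ofLinear (auxShearL r) (auxShearL (-r))
    (by
      apply LinearMap.ext
      intro x
      funext j
      refine Fin.cases ?_ ?_ j
      · simp [auxShearL, auxShearF_zero]
      · intro j
        simp only [LinearMap.comp_apply, LinearMap.id_apply, auxShearL, LinearMap.coe_mk,
          AddHom.coe_mk, auxShearF_succ, auxShearF_zero, Pi.neg_apply]
        ring)
    (by
      apply LinearMap.ext
      intro x
      funext j
      refine Fin.cases ?_ ?_ j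
      · simp [auxShearL, auxShearF_zero]
      · intro j
        simp only [LinearMap.comp_apply, LinearMap.id_apply, auxShearL, LinearMap.coe_mk,
          AddHom.coe_mk, auxShearF_succ, auxShearF_zero, Pi.neg_apply]
        ring)

lemma auxShearE_apply {m : ℕ} (r : Fin m → R) (x : Fin (m + 1) → R) :
    auxShearE r x = auxShearF r x := rfl

/-- Row operation: subtract `c i • (row 0)` from row `i+1`. -/
def auxRowStep {n m : ℕ} (c : Fin n → R) (A : Matrix (Fin (n + 1)) (Fin (m + 1)) R) :
    Matrix (Fin (n + 1)) (Fin (m + 1)) R :=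
  Matrix.of (Fin.cons (A 0) fun i => A i.succ - c i • A 0)

lemma auxRowStep_zero {n m : ℕ} (c : Fin n → R) (A : Matrix (Fin (n + 1)) (Fin (m + 1)) R) :
    auxRowStep c A 0 = A 0 := rfl

lemma auxRowStep_succ {n m : ℕ} (c : Fin n → R) (A : Matrix (Fin (n + 1)) (Fin (m + 1)) R)
    (i : Fin n) : auxRowStep c A i.succ = A i.succ - c i • A 0 :=
  Fin.cons_succ (α := fun _ : Fin (n + 1) => Fin (m + 1) → R) (A 0)
    (fun i : Fin n => A i.succ - c i • A 0) i

/-- Column operation: apply the shear to every row. -/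
def auxColStep {n m : ℕ} (r : Fin m → R) (A : Matrix (Fin n) (Fin (m + 1)) R) :
    Matrix (Fin n) (Fin (m + 1)) R :=
  Matrix.of fun i => auxShearF r (A i)

lemma auxColStep_apply {n m : ℕ} (r : Fin m → R) (A : Matrix (Fin n) (Fin (m + 1)) R)
    (i : Fin n) : auxColStep r A i = auxShearF r (A i) := rfl

lemma aux_rowStep_rowSpan {n m : ℕ} (c : Fin n → R) (A : Matrix (Fin (n + 1)) (Fin (m + 1)) R) :
    rowSpan R (auxRowStep c A) = rowSpan R A := by
  unfold rowSpan
  apply le_antisymm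
  · rw [Submodule.span_le]
    rintro _ ⟨i, rfl⟩
    dsimp only
    refine Fin.cases ?_ ?_ i
    · rw [auxRowStep_zero]
      exact Submodule.subset_span ⟨0, rfl⟩
    · intro i
      rw [auxRowStep_succ]
      exact sub_mem (Submodule.subset_span ⟨i.succ, rfl⟩)
        (Submodule.smul_mem _ _ (Submodule.subset_span ⟨0, rfl⟩))
  · rw [Submodule.span_le]
    rintro _ ⟨i, rfl⟩
    dsimp only
    refine Fin.cases ?_ ?_ i
    · exact Submodule.subset_span ⟨0, auxRowStep_zero c A⟩
    · intro i
      have : A i.succ = auxRowStep c A i.succ + c i • auxRowStep c A 0 := by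
        rw [auxRowStep_succ, auxRowStep_zero]; abel
      rw [this]
      exact add_mem (Submodule.subset_span ⟨i.succ, rfl⟩)
        (Submodule.smul_mem _ _ (Submodule.subset_span ⟨0, rfl⟩))

lemma aux_colStep_rowSpan {n m : ℕ} (r : Fin m → R) (A : Matrix (Fin n) (Fin (m + 1)) R) :
    rowSpan R (auxColStep r A) = Submodule.map (auxShearE r).toLinearMap
      (rowSpan R A) := by
  unfold rowSpan
  rw [Submodule.map_span]
  congr 1
  ext x
  constructor
  · rintro ⟨i, rfl⟩
    exact ⟨A i, ⟨i, rfl⟩, rfl⟩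
  · rintro ⟨_, ⟨i, rfl⟩, rfl⟩
    exact ⟨i, rfl⟩

/-- Transpose exchanges the row and column operations. -/
lemma aux_op_transpose {n m : ℕ} (c : Fin n → R) (r : Fin m → R)
    (A : Matrix (Fin (n + 1)) (Fin (m + 1)) R) :
    (auxColStep r (auxRowStep c A))ᵀ = auxColStep c (auxRowStep r Aᵀ) := by
  ext j i
  rw [Matrix.transpose_apply]
  refine Fin.cases ?_ ?_ i <;> refine Fin.cases ?_ ?_ j
  · rfl
  · intro j
    simp [auxColStep_apply, auxShearF_succ, auxShearF_zero, auxRowStep_zero, auxRowStep_succ,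
      Matrix.transpose_apply]
  · intro i
    simp [auxColStep_apply, auxShearF_succ, auxShearF_zero, auxRowStep_zero, auxRowStep_succ,
      Matrix.transpose_apply]
  · intro i j
    simp only [auxColStep_apply, auxShearF_succ, auxShearF_zero, auxRowStep_zero,
      auxRowStep_succ, Pi.sub_apply, Pi.smul_apply, smul_eq_mul, Matrix.transpose_apply]
    ring

/-- Row permutation does not change the row span. -/
lemma aux_rowPerm_rowSpan {n m : ℕ} (A : Matrix (Fin n) (Fin m) R) (e : Fin n ≃ Fin n) :
    rowSpan R (A.submatrix ⇑e id) = rowSpan R A := by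
  unfold rowSpan
  congr 1
  ext x
  constructor
  · rintro ⟨i, rfl⟩; exact ⟨e i, rfl⟩
  · rintro ⟨i, rfl⟩
    exact ⟨e.symm i, by funext j; simp [Matrix.submatrix_apply]⟩

/-- Column permutation maps the row span by the coordinate-permutation equivalence. -/
lemma aux_colPerm_rowSpan {n m : ℕ} (A : Matrix (Fin n) (Fin m) R) (e : Fin m ≃ Fin m) :
    rowSpan R (A.submatrix id ⇑e) =
      Submodule.map (LinearEquiv.funCongrLeft R R e).toLinearMap (rowSpan R A) := by
  unfold rowSpan
  rw [Submodule.map_span]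
  congr 1
  ext x
  constructor
  · rintro ⟨i, rfl⟩
    exact ⟨A i, ⟨i, rfl⟩, rfl⟩
  · rintro ⟨_, ⟨i, rfl⟩, rfl⟩
    exact ⟨i, rfl⟩

/-- A product decomposition of the row span of a matrix whose first row and first
column vanish off the `(0,0)` entry. -/
lemma aux_prodShape {n m : ℕ} (M : Matrix (Fin (n + 1)) (Fin (m + 1)) R)
    (h0 : ∀ j : Fin m, M 0 j.succ = 0) (hc : ∀ i : Fin n, M i.succ 0 = 0) :
    rowSpan R M = Submodule.map (auxConsLE R m).toLinearMap
      (Submodule.prod (Ideal.span {M 0 0}) (rowSpan R (M.submatrix Fin.succ Fin.succ))) := by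
  classical
  set C : Matrix (Fin n) (Fin m) R := M.submatrix Fin.succ Fin.succ with hC
  have hcons : ∀ x : R × (Fin m → R), (auxConsLE R m) x = Fin.cons x.1 x.2 := fun _ => rfl
  have hrow0 : (auxConsLE R m) (M 0 0, (0 : Fin m → R)) = M 0 := by
    funext j
    refine Fin.cases ?_ ?_ j <;> simp [hcons, h0]
  have hrowi : ∀ i : Fin n, (auxConsLE R m) ((0 : R), C i) = M i.succ := by
    intro i
    funext j
    refine Fin.cases ?_ ?_ j <;> simp [hcons, hc, hC, Matrix.submatrix_apply]
  apply le_antisymm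
  · unfold rowSpan
    rw [Submodule.span_le]
    rintro _ ⟨i, rfl⟩
    refine Fin.cases ?_ ?_ i
    · exact ⟨(M 0 0, 0), ⟨Ideal.subset_span rfl, Submodule.zero_mem _⟩, hrow0⟩
    · intro i
      exact ⟨(0, C i), ⟨Submodule.zero_mem _, Submodule.subset_span ⟨i, rfl⟩⟩, hrowi i⟩
  · rw [Submodule.map_le_iff_le_comap]
    rintro ⟨u, y⟩ ⟨hu, hy⟩
    show (auxConsLE R m) (u, y) ∈ rowSpan R M
    have hsplit : (auxConsLE R m) (u, y) =
        (auxConsLE R m) (u, 0) + (auxConsLE R m) (0, y) := by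
      rw [← map_add]
      simp
    rw [hsplit]
    apply add_mem
    · obtain ⟨t, ht⟩ := Ideal.mem_span_singleton.mp hu
      have : (auxConsLE R m) (u, 0) = t • M 0 := by
        rw [← hrow0, ← _root_.map_smul]
        congr 1
        refine Prod.ext ?_ ?_
        · show u = t * M 0 0
          exact ht.trans (mul_comm _ _)
        · show (0 : Fin m → R) = t • 0
          simp
      rw [this]
      exact Submodule.smul_mem _ _ (Submodule.subset_span ⟨0, rfl⟩)
    · have hg : ∀ z ∈ rowSpan R C, (auxConsLE R m) (0, z) ∈ rowSpan R M := by
        have : Submodule.map ((auxConsLE R m).toLinearMap.comp (LinearMap.inr R R (Fin m → R))) (rowSpan R C) ≤ rowSpan R M := by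
          unfold rowSpan
          rw [Submodule.map_span, Submodule.span_le]
          rintro _ ⟨_, ⟨i, rfl⟩, rfl⟩
          exact Submodule.subset_span ⟨i.succ, (hrowi i).symm ▸ rfl⟩
        intro z hz
        exact this ⟨z, hz, rfl⟩
      exact hg y hy

/-- Product of two submodules is isomorphic to the product of the modules. -/
def auxProdEquiv {M N : Type*} [AddCommGroup M] [AddCommGroup N] [Module R M] [Module R N]
    (p : Submodule R M) (q : Submodule R N) : ↥(p.prod q) ≃ₗ[R] ↥p × ↥q where
  toFun x := (⟨(x : M × N).1, x.2.1⟩, ⟨(x : M × N).2, x.2.2⟩)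
  invFun x := ⟨(x.1.1, x.2.1), ⟨x.1.2, x.2.2⟩⟩
  map_add' x y := rfl
  map_smul' t x := rfl
  left_inv x := rfl
  right_inv x := rfl

/-- The key fact: the row span of a matrix over a ring with total divisibility is
isomorphic to the row span of its transpose. -/
lemma aux_rowSpan_transpose (htot : ∀ a b : R, a ∣ b ∨ b ∣ a) :
    ∀ n m : ℕ, ∀ A : Matrix (Fin n) (Fin m) R,
      Nonempty (↥(rowSpan R A) ≃ₗ[R] ↥(rowSpan R Aᵀ)) := by
  intro n
  induction n with
  | zero =>
    intro m A
    have h1 : rowSpan R A = ⊥ := by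
      unfold rowSpan
      rw [Set.range_eq_empty, Submodule.span_empty]
    haveI : Subsingleton ↥(rowSpan R A) := by rw [h1]; infer_instance
    haveI : Subsingleton ↥(rowSpan R Aᵀ) := by
      haveI : Subsingleton (Fin 0 → R) := inferInstance
      infer_instance
    exact ⟨LinearEquiv.ofSubsingleton _ _⟩
  | succ n ih =>
    intro m A
    rcases m with - | m
    · have h1 : rowSpan R Aᵀ = ⊥ := by
        unfold rowSpan
        rw [Set.range_eq_empty, Submodule.span_empty]
      haveI : Subsingleton ↥(rowSpan R Aᵀ) := by rw [h1]; infer_instance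
      haveI : Subsingleton ↥(rowSpan R A) := by
        haveI : Subsingleton (Fin 0 → R) := inferInstance
        infer_instance
      exact ⟨LinearEquiv.ofSubsingleton _ _⟩
    · classical
      obtain ⟨p, hp⟩ := aux_exists_dvd_all htot
        (fun p : Fin (n + 1) × Fin (m + 1) => A p.1 p.2)
      set σr : Fin (n + 1) ≃ Fin (n + 1) := Equiv.swap 0 p.1 with hσr
      set σc : Fin (m + 1) ≃ Fin (m + 1) := Equiv.swap 0 p.2 with hσc
      set A' : Matrix (Fin (n + 1)) (Fin (m + 1)) R := A.submatrix ⇑σr ⇑σc with hA'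
      set a : R := A' 0 0 with ha
      have hA'00 : a = A p.1 p.2 := by
        simp [ha, hA', hσr, hσc, Matrix.submatrix, Equiv.swap_apply_left]
      have hdvd : ∀ i j, a ∣ A' i j := by
        intro i j
        rw [hA'00]
        exact hp (σr i, σc j)
      -- iso between rowSpan A and rowSpan A'
      have isoA : Nonempty (↥(rowSpan R A') ≃ₗ[R] ↥(rowSpan R A)) := by
        have h1 : A' = (A.submatrix id ⇑σc).submatrix ⇑σr id := by
          rw [Matrix.submatrix_submatrix]; rfl
        have h2 : rowSpan R A' = Submodule.map
            (LinearEquiv.funCongrLeft R R σc).toLinearMap (rowSpan R A) := by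
          rw [h1, aux_rowPerm_rowSpan, aux_colPerm_rowSpan]
        exact ⟨(LinearEquiv.ofEq _ _ h2).trans
          ((LinearEquiv.funCongrLeft R R σc).submoduleMap (rowSpan R A)).symm⟩
      have isoAT : Nonempty (↥(rowSpan R A'ᵀ) ≃ₗ[R] ↥(rowSpan R Aᵀ)) := by
        have h1 : A'ᵀ = (Aᵀ.submatrix id ⇑σr).submatrix ⇑σc id := by
          rw [hA', Matrix.transpose_submatrix, Matrix.submatrix_submatrix]; rfl
        have h2 : rowSpan R A'ᵀ = Submodule.map
            (LinearEquiv.funCongrLeft R R σr).toLinearMap (rowSpan R Aᵀ) := by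
          rw [h1, aux_rowPerm_rowSpan, aux_colPerm_rowSpan]
        exact ⟨(LinearEquiv.ofEq _ _ h2).trans
          ((LinearEquiv.funCongrLeft R R σr).submoduleMap (rowSpan R Aᵀ)).symm⟩
      -- clearing coefficients
      have hcol : ∀ i : Fin n, ∃ t : R, A' i.succ 0 = a * t := fun i => (hdvd i.succ 0)
      have hrow : ∀ j : Fin m, ∃ t : R, A' 0 j.succ = a * t := fun j => (hdvd 0 j.succ)
      choose c hcspec using hcol
      choose r hrspec using hrow
      set B : Matrix (Fin (n + 1)) (Fin (m + 1)) R := auxColStep r (auxRowStep c A') with hB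
      have hB00 : B 0 0 = a := by
        rw [hB, auxColStep_apply, auxShearF_zero, auxRowStep_zero]
      have hB0succ : ∀ j : Fin m, B 0 j.succ = 0 := by
        intro j
        rw [hB, auxColStep_apply, auxShearF_succ, auxRowStep_zero]
        rw [hrspec j]
        ring
      have hBsucc0 : ∀ i : Fin n, B i.succ 0 = 0 := by
        intro i
        rw [hB, auxColStep_apply, auxShearF_zero, auxRowStep_succ]
        simp only [Pi.sub_apply, Pi.smul_apply, smul_eq_mul]
        rw [hcspec i]
        ring
      -- iso between rowSpan A' and rowSpan B
      have isoB : Nonempty (↥(rowSpan R A') ≃ₗ[R] ↥(rowSpan R B)) := by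
        have h2 : rowSpan R B = Submodule.map (auxShearE r).toLinearMap
            (rowSpan R A') := by
          rw [hB, aux_colStep_rowSpan, aux_rowStep_rowSpan]
        exact ⟨((auxShearE r).submoduleMap (rowSpan R A')).trans
          (LinearEquiv.ofEq _ _ h2.symm)⟩
      have isoBT : Nonempty (↥(rowSpan R A'ᵀ) ≃ₗ[R] ↥(rowSpan R Bᵀ)) := by
        have h1 : Bᵀ = auxColStep c (auxRowStep r A'ᵀ) := by
          rw [hB, aux_op_transpose]
        have h2 : rowSpan R Bᵀ = Submodule.map (auxShearE c).toLinearMap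
            (rowSpan R A'ᵀ) := by
          rw [h1, aux_colStep_rowSpan, aux_rowStep_rowSpan]
        exact ⟨((auxShearE c).submoduleMap (rowSpan R A'ᵀ)).trans
          (LinearEquiv.ofEq _ _ h2.symm)⟩
      -- product decomposition of B and Bᵀ
      set C : Matrix (Fin n) (Fin m) R := B.submatrix Fin.succ Fin.succ with hCdef
      have hdecB : rowSpan R B = Submodule.map (auxConsLE R m).toLinearMap
          (Submodule.prod (Ideal.span {B 0 0}) (rowSpan R C)) := aux_prodShape B hB0succ hBsucc0
      have hBT0succ : ∀ i : Fin n, Bᵀ 0 i.succ = 0 := fun i => hBsucc0 i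
      have hBTsucc0 : ∀ j : Fin m, Bᵀ j.succ 0 = 0 := fun j => hB0succ j
      have hCT : Bᵀ.submatrix Fin.succ Fin.succ = Cᵀ := by
        rw [hCdef, ← Matrix.transpose_submatrix]
      have hdecBT : rowSpan R Bᵀ = Submodule.map (auxConsLE R n).toLinearMap
          (Submodule.prod (Ideal.span {Bᵀ 0 0}) (rowSpan R Cᵀ)) := by
        rw [← hCT]
        exact aux_prodShape Bᵀ hBT0succ hBTsucc0
      have hBT00 : Bᵀ 0 0 = B 0 0 := rfl
      -- combine
      obtain ⟨e1⟩ := isoA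
      obtain ⟨e2⟩ := isoAT
      obtain ⟨e3⟩ := isoB
      obtain ⟨e4⟩ := isoBT
      obtain ⟨eC⟩ := ih m C
      have eB : ↥(rowSpan R B) ≃ₗ[R] ↥(Ideal.span {B 0 0}) × ↥(rowSpan R C) :=
        (LinearEquiv.ofEq _ _ hdecB).trans
          (((auxConsLE R m).submoduleMap _).symm.trans (auxProdEquiv _ _))
      have eBT : ↥(rowSpan R Bᵀ) ≃ₗ[R] ↥(Ideal.span {B 0 0}) × ↥(rowSpan R Cᵀ) :=
        (LinearEquiv.ofEq _ _ (hBT00 ▸ hdecBT)).trans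
          (((auxConsLE R n).submoduleMap _).symm.trans (auxProdEquiv _ _))
      have emid : (↥(Ideal.span {B 0 0}) × ↥(rowSpan R C)) ≃ₗ[R]
          (↥(Ideal.span {B 0 0}) × ↥(rowSpan R Cᵀ)) :=
        (LinearEquiv.refl R _).prodCongr eC
      exact ⟨e1.symm.trans (e3.trans (eB.trans (emid.trans
        (eBT.symm.trans (e4.symm.trans e2)))))⟩

end AuxShapeTranspose

/-- The shape of a matrix over a finite chain ring equals the shape of its transpose. -/
theorem shape_transpose {R : Type*} [CommRing R] [Fintype R] [IsLocalRing R] [IsPrincipalIdealRing R]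
    (q s : ℕ) (hs : 0 < s) (π : R)
    (hmax : IsLocalRing.maximalIdeal R = Ideal.span {π})
    (hnil : π ^ s = 0) (hnil' : π ^ (s - 1) ≠ 0)
    (hq : Nat.card (IsLocalRing.ResidueField R) = q)
    {n m : ℕ} (A : Matrix (Fin n) (Fin m) R)
    (μ : Fin s → ℕ) (hμ : Monotone μ) :
    HasShape R π μ ↥(rowSpan R A) ↔ HasShape R π μ ↥(rowSpan R A.transpose) := by
  obtain ⟨e⟩ := aux_rowSpan_transpose (aux_dvd_total hmax hnil) n m A
  constructor
  · rintro ⟨f⟩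
    exact ⟨e.symm.trans f⟩
  · rintro ⟨f⟩
    exact ⟨e.trans f⟩
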